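/- Let t = (t_1, …, t_n) be a time series and let r = (r_1, …, r_{m+1}) be a pattern (m ≥ 1) whose prefix sub-pattern is e = (r_1, …, r_m). If ⟨j⟩ is an occurrence of r in t (so R(t_{j−m}, …, t_j) = R(r)), then ⟨j−1⟩ is an occurrence of e in t. Consequently the map j ↦ j−1 injects the occurrence set L_r into the occurrence set L_e, and |L_r| ≤ |L_e| (anti-monotonicity with respect to the prefix pattern). -/

import Mathlib

open scoped Classical

/-- The rank of the `i`-th entry of a finite sequence `a`:
`rank_a(a_i) = 1 + |{j : a_j < a_i}|`. -/
noncomputable def rankOf {m : ℕ} (a : Fin m → ℝ) (i : Fin m) : ℕ :=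
  1 + (Finset.univ.filter fun j => a j < a i).card

/-- The relative order `R(a) = (rank_a(a_1), …, rank_a(a_m))`. -/
noncomputable def relOrder {m : ℕ} (a : Fin m → ℝ) : Fin m → ℕ :=
  fun i => rankOf a i

/-- `⟨j⟩` (1-based, `m ≤ j ≤ n`) is an occurrence of the length-`m` pattern `p` in
the time series `t = (t_1, …, t_n)`:  `R(t_{j-m+1}, …, t_j) = R(p)`. -/
def isOcc {n m : ℕ} (t : Fin n → ℝ) (p : Fin m → ℝ) (j : ℕ) : Prop :=
  ∃ (_hm : m ≤ j) (_hn : j ≤ n),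
    relOrder (fun i : Fin m => t ⟨j - m + i.val, by have := i.isLt; omega⟩) = relOrder p

lemma lt_iff_rank_lt {m : ℕ} (a : Fin m → ℝ) (i j : Fin m) :
    a i < a j ↔ rankOf a i < rankOf a j := by
  constructor
  · intro h
    unfold rankOf
    have hss : (Finset.univ.filter fun k => a k < a i) ⊂
        (Finset.univ.filter fun k => a k < a j) := by
      constructor
      · intro k hk
        simp only [Finset.mem_filter, Finset.mem_univ, true_and] at *
        exact lt_trans hk h
      · intro hsub
        have := hsub (by simp [h] : i ∈ Finset.univ.filter fun k => a k < a j)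
        simp at this
    have := Finset.card_lt_card hss
    omega
  · intro h
    by_contra hle
    push_neg at hle
    have hsub : (Finset.univ.filter fun k => a k < a j) ⊆
        (Finset.univ.filter fun k => a k < a i) := by
      intro k hk
      simp only [Finset.mem_filter, Finset.mem_univ, true_and] at *
      exact lt_of_lt_of_le hk hle
    have := Finset.card_le_card hsub
    unfold rankOf at h
    omega

lemma relOrder_eq_of_cmp {m : ℕ} (a b : Fin m → ℝ)
    (h : ∀ i j : Fin m, a i < a j ↔ b i < b j) : relOrder a = relOrder b := by
  funext i
  unfold relOrder rankOf
  congr 1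
  apply Finset.card_bij (fun x _ => x)
  · intro x hx; simp only [Finset.mem_filter, Finset.mem_univ, true_and] at *
    exact (h x i).mp hx
  · intro x y _ _ hxy; exact hxy
  · intro x hx; refine ⟨x, ?_, rfl⟩
    simp only [Finset.mem_filter, Finset.mem_univ, true_and] at *
    exact (h x i).mpr hx

lemma cmp_of_relOrder_eq {m : ℕ} (a b : Fin m → ℝ)
    (h : relOrder a = relOrder b) (i j : Fin m) : a i < a j ↔ b i < b j := by
  have hi := congrFun h i
  have hj := congrFun h j
  simp only [relOrder] at hi hj
  rw [lt_iff_rank_lt, lt_iff_rank_lt, hi, hj]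

/-- Anti-monotonicity with respect to the prefix pattern: every occurrence `⟨j⟩` of
`r = (r_1, …, r_{m+1})` yields an occurrence `⟨j-1⟩` of the prefix sub-pattern
`e = (r_1, …, r_m)`; the map `j ↦ j - 1` injects `L_r` into `L_e`; and
`|L_r| ≤ |L_e|`. -/
theorem prefix_antimonotone {n m : ℕ} (hm : 1 ≤ m) (t : Fin n → ℝ)
    (r : Fin (m + 1) → ℝ) :
    (∀ j : ℕ, isOcc t r j → isOcc t (fun i : Fin m => r i.castSucc) (j - 1)) ∧
    Set.InjOn (fun j => j - 1) {j : ℕ | isOcc t r j} ∧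
    Set.MapsTo (fun j => j - 1) {j : ℕ | isOcc t r j}
      {j : ℕ | isOcc t (fun i : Fin m => r i.castSucc) j} ∧
    {j : ℕ | isOcc t r j}.ncard ≤
      {j : ℕ | isOcc t (fun i : Fin m => r i.castSucc) j}.ncard := by
  have key : ∀ j : ℕ, isOcc t r j → isOcc t (fun i : Fin m => r i.castSucc) (j - 1) := by
    intro j hj
    obtain ⟨hmj, hjn, heq⟩ := hj
    refine ⟨by omega, by omega, ?_⟩
    have hcmp := cmp_of_relOrder_eq _ _ heq
    apply relOrder_eq_of_cmp
    intro i k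
    have h1 : (⟨j - 1 - m + i.val, by have := i.isLt; omega⟩ : Fin n) =
        ⟨j - (m+1) + (i.castSucc).val, by have := i.isLt; omega⟩ := by
      apply Fin.ext; simp [Fin.castSucc]; omega
    have h2 : (⟨j - 1 - m + k.val, by have := k.isLt; omega⟩ : Fin n) =
        ⟨j - (m+1) + (k.castSucc).val, by have := k.isLt; omega⟩ := by
      apply Fin.ext; simp [Fin.castSucc]; omega
    simp only [h1, h2]
    exact hcmp i.castSucc k.castSucc
  have inj : Set.InjOn (fun j => j - 1) {j : ℕ | isOcc t r j} := by
    intro a ha b hb hab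
    obtain ⟨ha1, -, -⟩ := ha
    obtain ⟨hb1, -, -⟩ := hb
    simp only at hab
    omega
  have maps : Set.MapsTo (fun j => j - 1) {j : ℕ | isOcc t r j}
      {j : ℕ | isOcc t (fun i : Fin m => r i.castSucc) j} := fun j hj => key j hj
  refine ⟨key, inj, maps, ?_⟩
  have hfin : {j : ℕ | isOcc t (fun i : Fin m => r i.castSucc) j}.Finite := by
    apply Set.Finite.subset (Set.finite_Icc 0 n)
    rintro j ⟨-, hj, -⟩
    exact ⟨Nat.zero_le _, hj⟩
  calc {j : ℕ | isOcc t r j}.ncard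
      = ((fun j => j - 1) '' {j : ℕ | isOcc t r j}).ncard :=
        (Set.ncard_image_of_injOn inj).symm
    _ ≤ _ := Set.ncard_le_ncard (Set.mapsTo_iff_image_subset.mp maps) hfin
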